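/- arXiv:2108.01651 — 2 statements merged into one kernel-verified Lean document; each statement's English description precedes it below -/
import Mathlib

section
/- Let α be a type, let a b : α with a ≠ b, and let l, l₀, l₁ be lists over α such that l is a prefix of l₀, l is a prefix of l₁, l₀ has no duplicate elements, and l₁ has no duplicate elements. Suppose a and b both occur in l₀ and both occur in l₁, that a occurs before b in l₀ (i.e., there are indices i < j with the i-th element of l₀ equal to a and the j-th element equal to b), and that b occurs before a in l₁. Then a does not occur in l and b does not occur in l. -/
/-- `a` occurs before `b` in the list `l`: there are indices `i < j`, both less than
the length of `l`, such that the `i`-th element of `l` is `a` and the `j`-th element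
of `l` is `b`. -/
def OccursBefore {α : Type*} (l : List α) (a b : α) : Prop :=
  ∃ (i j : ℕ) (hi : i < l.length) (hj : j < l.length),
    i < j ∧ l.get ⟨i, hi⟩ = a ∧ l.get ⟨j, hj⟩ = b

lemma occursBefore_idxOf {α : Type*} [DecidableEq α] {l : List α} {a b : α}
    (nd : l.Nodup) (h : OccursBefore l a b) : l.idxOf a < l.idxOf b := by
  obtain ⟨i, j, hi, hj, hij, ha, hb⟩ := h
  have hina : a ∈ l := ha ▸ l.get_mem _
  have hinb : b ∈ l := hb ▸ l.get_mem _
  have hia : l.idxOf a = i := by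
    have := List.nodup_iff_injective_get.mp nd
      (a₁ := ⟨l.idxOf a, List.idxOf_lt_length_iff.mpr hina⟩) (a₂ := ⟨i, hi⟩)
      (by rw [ha, List.idxOf_get])
    exact congrArg Fin.val this
  have hib : l.idxOf b = j := by
    have := List.nodup_iff_injective_get.mp nd
      (a₁ := ⟨l.idxOf b, List.idxOf_lt_length_iff.mpr hinb⟩) (a₂ := ⟨j, hj⟩)
      (by rw [hb, List.idxOf_get])
    exact congrArg Fin.val this
  omega

lemma prefix_idxOf_eq {α : Type*} [DecidableEq α] {l l' : List α} {a : α}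
    (h : l <+: l') (ha : a ∈ l) : l'.idxOf a = l.idxOf a := by
  obtain ⟨t, rfl⟩ := h
  exact List.idxOf_append_of_mem ha

lemma mem_of_idxOf_lt {α : Type*} [DecidableEq α] {l l' : List α} {a : α}
    (h : l <+: l') (ha : a ∈ l') (hlt : l'.idxOf a < l.length) : a ∈ l := by
  obtain ⟨t, rfl⟩ := h
  have : (l ++ t).get ⟨(l ++ t).idxOf a, List.idxOf_lt_length_iff.mpr ha⟩ = a :=
    List.idxOf_get _
  rw [List.get_eq_getElem, List.getElem_append_left hlt] at this
  exact this ▸ List.getElem_mem _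

/-- If `l` is a common prefix of two duplicate-free lists `l₀` and `l₁` that both
contain the distinct elements `a` and `b`, with `a` before `b` in `l₀` but `b` before
`a` in `l₁`, then neither `a` nor `b` occurs in `l`. -/
theorem common_prefix_of_oppositely_ordered_not_mem
    {α : Type*} {a b : α} (hab : a ≠ b) {l l₀ l₁ : List α}
    (h0 : l <+: l₀) (h1 : l <+: l₁)
    (nd0 : l₀.Nodup) (nd1 : l₁.Nodup)
    (ha0 : a ∈ l₀) (hb0 : b ∈ l₀) (ha1 : a ∈ l₁) (hb1 : b ∈ l₁)
    (hord0 : OccursBefore l₀ a b) (hord1 : OccursBefore l₁ b a) :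
    a ∉ l ∧ b ∉ l := by
  classical
  have key0 := occursBefore_idxOf nd0 hord0
  have key1 := occursBefore_idxOf nd1 hord1
  constructor
  · intro hal
    have e0 := prefix_idxOf_eq h0 hal
    have e1 := prefix_idxOf_eq h1 hal
    have hia : l.idxOf a < l.length := List.idxOf_lt_length_iff.mpr hal
    have hbl : b ∈ l := mem_of_idxOf_lt h1 hb1 (by omega)
    have f0 := prefix_idxOf_eq h0 hbl
    have f1 := prefix_idxOf_eq h1 hbl
    omega
  · intro hbl
    have e0 := prefix_idxOf_eq h0 hbl
    have e1 := prefix_idxOf_eq h1 hbl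
    have hib : l.idxOf b < l.length := List.idxOf_lt_length_iff.mpr hbl
    have hal : a ∈ l := mem_of_idxOf_lt h0 ha0 (by omega)
    have f0 := prefix_idxOf_eq h0 hal
    have f1 := prefix_idxOf_eq h1 hal
    omega
end

section
/- Let α be a type, p : α → Bool, and let a b : α with a ≠ b, p a = true, and p b = true. Let l, l₀, l₁ be lists over α without duplicate elements such that the sublist of l consisting of elements satisfying p (i.e., l.filter p) is a prefix of l₀.filter p and also a prefix of l₁.filter p. Suppose a and b both occur in l₀ and both occur in l₁, that a occurs before b in l₀ (i.e., there are indices i < j with the i-th element of l₀ equal to a and the j-th element equal to b), and that b occurs before a in l₁. Then a does not occur in l and b does not occur in l. -/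
theorem occursBefore_iff_sublist {α : Type*} {l : List α} {a b : α} :
    OccursBefore l a b ↔ List.Sublist [a, b] l := by
  constructor
  · rintro ⟨i, j, hi, hj, hij, rfl, rfl⟩
    have h1 : List.Sublist [l.get ⟨i, hi⟩] (l.take j) := by
      apply List.singleton_sublist.2
      rw [List.mem_take_iff_getElem]
      exact ⟨i, by omega, rfl⟩
    have h2 : l.get ⟨j, hj⟩ :: l.drop (j + 1) = l.drop j := by
      simpa using (List.drop_eq_getElem_cons hj).symm
    have h3 : List.Sublist [l.get ⟨j, hj⟩] (l.drop j) := by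
      rw [← h2]; exact (List.nil_sublist _).cons₂ _
    have := h1.append h3
    rwa [List.take_append_drop] at this
  · intro h
    induction l with
    | nil => exact absurd h (by simp)
    | cons c t ih =>
      rcases h with _ | _
      case cons h =>
        obtain ⟨i, j, hi, hj, hij, ha, hb⟩ := ih ‹_›
        exact ⟨i + 1, j + 1, by simpa using Nat.succ_lt_succ hi,
          by simpa using Nat.succ_lt_succ hj, by omega, ha, hb⟩
      case cons_cons h =>
        have hb : b ∈ t := (List.singleton_sublist.1 h)
        obtain ⟨j, hj, hbj⟩ := List.mem_iff_get.1 hb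
        exact ⟨0, j + 1, by simp, by simpa using Nat.succ_lt_succ j.isLt,
          by omega, rfl, by simpa using hbj⟩

theorem occursBefore_indexOf {α : Type*} [DecidableEq α] {l : List α} {a b : α}
    (nd : l.Nodup) (h : OccursBefore l a b) :
    a ∈ l ∧ b ∈ l ∧ l.idxOf a < l.idxOf b := by
  obtain ⟨i, j, hi, hj, hij, ha, hb⟩ := h
  have ha' : a ∈ l := ha ▸ l.get_mem _
  have hb' : b ∈ l := hb ▸ l.get_mem _
  have hinj := List.nodup_iff_injective_get.1 nd
  have e1 : i = l.idxOf a := by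
    have : l.get ⟨i, hi⟩ = l.get ⟨l.idxOf a, List.idxOf_lt_length_iff.2 ha'⟩ := by
      rw [ha, List.idxOf_get]
    exact congrArg Fin.val (hinj this)
  have e2 : j = l.idxOf b := by
    have : l.get ⟨j, hj⟩ = l.get ⟨l.idxOf b, List.idxOf_lt_length_iff.2 hb'⟩ := by
      rw [hb, List.idxOf_get]
    exact congrArg Fin.val (hinj this)
  exact ⟨ha', hb', e1 ▸ e2 ▸ hij⟩

theorem indexOf_occursBefore {α : Type*} [DecidableEq α] {l : List α} {a b : α}
    (ha : a ∈ l) (hb : b ∈ l) (h : l.idxOf a < l.idxOf b) :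
    OccursBefore l a b :=
  ⟨l.idxOf a, l.idxOf b, List.idxOf_lt_length_iff.2 ha, List.idxOf_lt_length_iff.2 hb,
    h, List.idxOf_get _, List.idxOf_get _⟩

theorem prefix_indexOf_eq {α : Type*} [DecidableEq α] {s t : List α} {a : α}
    (h : s <+: t) (ha : a ∈ s) : t.idxOf a = s.idxOf a := by
  obtain ⟨u, rfl⟩ := h
  exact List.idxOf_append_of_mem ha

/-- Key helper: if `s` is a prefix of the nodup list `t`, `b` occurs before `a`
in `t`, and `a ∈ s`, then `b ∈ s` and `b` occurs before `a` in `s`. -/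
theorem prefix_helper {α : Type*} [DecidableEq α] {s t : List α} {a b : α}
    (ndt : t.Nodup) (hpre : s <+: t) (hord : OccursBefore t b a) (ha : a ∈ s) :
    b ∈ s ∧ OccursBefore s b a := by
  obtain ⟨hbt, hat, hlt⟩ := occursBefore_indexOf ndt hord
  have hia : t.idxOf a = s.idxOf a := prefix_indexOf_eq hpre ha
  have hlen : t.idxOf b < s.length := by
    have := List.idxOf_lt_length_iff.2 ha
    omega
  have hbs : b ∈ s := by
    have h1 : s[t.idxOf b] = t[t.idxOf b]'(List.idxOf_lt_length_iff.2 hbt) :=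
      hpre.getElem hlen
    have h2 : t[t.idxOf b]'(List.idxOf_lt_length_iff.2 hbt) = b :=
      List.getElem_idxOf _
    have : s[t.idxOf b] = b := h1.trans h2
    exact this ▸ List.getElem_mem _
  have hib : t.idxOf b = s.idxOf b := prefix_indexOf_eq hpre hbs
  exact ⟨hbs, indexOf_occursBefore hbs ha (by omega)⟩

theorem occursBefore_filter {α : Type*} {l : List α} {a b : α} (p : α → Bool)
    (hpa : p a = true) (hpb : p b = true) (h : OccursBefore l a b) :
    OccursBefore (l.filter p) a b := by
  rw [occursBefore_iff_sublist] at h ⊢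
  have := h.filter p
  simpa [hpa, hpb] using this

/-- Let `a ≠ b` both satisfy `p`, and let `l, l₀, l₁` be duplicate-free lists such
that `l.filter p` is a prefix of both `l₀.filter p` and `l₁.filter p`.  If `a` and `b`
both occur in `l₀` and in `l₁`, with `a` before `b` in `l₀` but `b` before `a` in
`l₁`, then neither `a` nor `b` occurs in `l`. -/
theorem common_filter_prefix_of_oppositely_ordered_not_mem
    {α : Type*} (p : α → Bool) {a b : α} (hab : a ≠ b)
    (hpa : p a = true) (hpb : p b = true) {l l₀ l₁ : List α}
    (ndl : l.Nodup) (nd0 : l₀.Nodup) (nd1 : l₁.Nodup)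
    (h0 : l.filter p <+: l₀.filter p) (h1 : l.filter p <+: l₁.filter p)
    (ha0 : a ∈ l₀) (hb0 : b ∈ l₀) (ha1 : a ∈ l₁) (hb1 : b ∈ l₁)
    (hord0 : OccursBefore l₀ a b) (hord1 : OccursBefore l₁ b a) :
    a ∉ l ∧ b ∉ l := by
  classical
  have nd0f : (l₀.filter p).Nodup := nd0.filter p
  have nd1f : (l₁.filter p).Nodup := nd1.filter p
  have key0 : OccursBefore (l₀.filter p) a b := occursBefore_filter p hpa hpb hord0
  have key1 : OccursBefore (l₁.filter p) b a := occursBefore_filter p hpb hpa hord1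
  constructor
  · intro hal
    have has : a ∈ l.filter p := List.mem_filter.2 ⟨hal, hpa⟩
    obtain ⟨hbs, hord⟩ := prefix_helper nd1f h1 key1 has
    -- b occurs before a in l.filter p, hence in l₀.filter p
    have : OccursBefore (l₀.filter p) b a := by
      rw [occursBefore_iff_sublist] at hord ⊢
      exact hord.trans h0.sublist
    obtain ⟨_, _, h01⟩ := occursBefore_indexOf nd0f key0
    obtain ⟨_, _, h02⟩ := occursBefore_indexOf nd0f this
    omega
  · intro hbl
    have hbs : b ∈ l.filter p := List.mem_filter.2 ⟨hbl, hpb⟩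
    obtain ⟨has, hord⟩ := prefix_helper nd0f h0 key0 hbs
    have : OccursBefore (l₁.filter p) a b := by
      rw [occursBefore_iff_sublist] at hord ⊢
      exact hord.trans h1.sublist
    obtain ⟨_, _, h11⟩ := occursBefore_indexOf nd1f key1
    obtain ⟨_, _, h12⟩ := occursBefore_indexOf nd1f this
    omega
end
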